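/- Let V be a finite-dimensional real inner product space with inner product (·,·), let K, M : V → V be symmetric positive definite linear operators, and write |v|²_K = (Kv,v), |v|²_M = (Mv,v), |f|²_{M^{−1}} = (M^{−1}f,f). Let W ⊆ V be a subspace, and suppose there is a constant Λ > 0 such that |w|_M ≤ Λ |w|_K for all w ∈ W. Let W^{⊥K} = {v ∈ V : (Kv,w) = 0 for all w ∈ W}. If u ∈ V satisfies (Ku,v) = (f,v) for all v ∈ V and u_H ∈ W^{⊥K} satisfies (Ku_H,v) = (f,v) for all v ∈ W^{⊥K}, then |u − u_H|_K ≤ Λ |f|_{M^{−1}}. (This is the ideal multiscale error bound, Lemma 4.2, with Λ = C_{α,d,μ,σ} H supplied by the interpolation estimate.) -/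

import Mathlib

open RealInnerProductSpace

/-- **Ideal multiscale error bound (Lemma 4.2, abstract form).**
Let `V` be a finite-dimensional real inner product space, `K, M : V → V`
symmetric positive definite linear operators (with `Minv` the inverse of `M`),
`W ⊆ V` a subspace on which `|w|_M ≤ Λ |w|_K`, and `W^{⊥K}` the `K`-orthogonal
complement of `W`.  If `u` solves `(Ku,v) = (f,v)` for all `v ∈ V` and
`u_H ∈ W^{⊥K}` is its Galerkin approximation in `W^{⊥K}`, then
`|u − u_H|_K ≤ Λ |f|_{M⁻¹}`. -/
theorem ideal_multiscale_error_bound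
    {V : Type*} [NormedAddCommGroup V] [InnerProductSpace ℝ V] [FiniteDimensional ℝ V]
    (K M Minv : V →ₗ[ℝ] V)
    (hKsymm : ∀ u v : V, ⟪K u, v⟫ = ⟪u, K v⟫)
    (hKpos : ∀ v : V, v ≠ 0 → 0 < ⟪K v, v⟫)
    (hMsymm : ∀ u v : V, ⟪M u, v⟫ = ⟪u, M v⟫)
    (hMpos : ∀ v : V, v ≠ 0 → 0 < ⟪M v, v⟫)
    (hMinv₁ : M ∘ₗ Minv = LinearMap.id) (hMinv₂ : Minv ∘ₗ M = LinearMap.id)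
    (W : Submodule ℝ V) (Λ : ℝ) (hΛ : 0 < Λ)
    (hW : ∀ w ∈ W, Real.sqrt ⟪M w, w⟫ ≤ Λ * Real.sqrt ⟪K w, w⟫)
    (f u uH : V)
    (hu : ∀ v : V, ⟪K u, v⟫ = ⟪f, v⟫)
    (huH_mem : ∀ w ∈ W, ⟪K uH, w⟫ = 0)
    (huH : ∀ v : V, (∀ w ∈ W, ⟪K v, w⟫ = 0) → ⟪K uH, v⟫ = ⟪f, v⟫) :
    Real.sqrt ⟪K (u - uH), u - uH⟫ ≤ Λ * Real.sqrt ⟪Minv f, f⟫ := by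
  classical
  set e := u - uH with he
  -- nonnegativity helpers
  have hKnn : ∀ v : V, 0 ≤ ⟪K v, v⟫ := by
    intro v
    rcases eq_or_ne v 0 with rfl | hv
    · simp
    · exact (hKpos v hv).le
  have hMnn : ∀ v : V, 0 ≤ ⟪M v, v⟫ := by
    intro v
    rcases eq_or_ne v 0 with rfl | hv
    · simp
    · exact (hMpos v hv).le
  -- the bilinear form B x y = ⟪K x, y⟫
  let B : LinearMap.BilinForm ℝ V := LinearMap.mk₂ ℝ (fun x y => ⟪K x, y⟫)
    (by intro x y z; simp [inner_add_left])
    (by intro c x y; simp [real_inner_smul_left])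
    (by intro x y z; simp [inner_add_right])
    (by intro c x y; simp [real_inner_smul_right])
  have hBapp : ∀ x y : V, B x y = ⟪K x, y⟫ := fun x y => rfl
  have hBsymm : ∀ x y : V, B x y = B y x := by
    intro x y
    rw [hBapp, hBapp, hKsymm, real_inner_comm]
  have hBrefl : B.IsRefl := fun x y h => by rw [hBsymm]; exact h
  -- membership in the K-orthogonal complement
  have hmem_orth : ∀ v : V, v ∈ B.orthogonal W ↔ ∀ w ∈ W, ⟪K v, w⟫ = 0 := by
    intro v
    constructor
    · intro hv w hw
      have := hv w hw
      change B w v = 0 at this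
      rw [hBsymm] at this
      exact this
    · intro hv w hw
      show B w v = 0
      rw [hBsymm]
      exact hv w hw
  -- Galerkin orthogonality : K e ⟂ (W^{⊥K})
  have hgal : ∀ v ∈ B.orthogonal W, ⟪K e, v⟫ = 0 := by
    intro v hv
    have h1 : ⟪K u, v⟫ = ⟪f, v⟫ := hu v
    have h2 : ⟪K uH, v⟫ = ⟪f, v⟫ := huH v ((hmem_orth v).mp hv)
    rw [he]
    simp only [map_sub, inner_sub_left, h1, h2, sub_self]
  have huH_orth : uH ∈ B.orthogonal W := (hmem_orth uH).mpr huH_mem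
  -- IsCompl
  have hdisj : Disjoint W (B.orthogonal W) := by
    rw [Submodule.disjoint_def]
    intro x hx hx'
    by_contra hxne
    have := ((hmem_orth x).mp hx') x hx
    exact absurd this (ne_of_gt (hKpos x hxne))
  have hcompl : IsCompl W (B.orthogonal W) :=
    (LinearMap.BilinForm.isCompl_orthogonal_iff_disjoint hBrefl).mpr hdisj
  -- decompose e = w + z
  have hetop : e ∈ W ⊔ B.orthogonal W := by
    rw [hcompl.sup_eq_top]; trivial
  obtain ⟨w, hwW, z, hz, hwz⟩ := Submodule.mem_sup.mp hetop
  -- z = 0, so e ∈ W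
  have hKwz : ⟪K w, z⟫ = 0 := by
    have := ((hmem_orth z).mp hz) w hwW
    rw [hKsymm, real_inner_comm] at this
    exact this
  have hKez : ⟪K e, z⟫ = 0 := hgal z hz
  have hKzz : ⟪K z, z⟫ = 0 := by
    have : ⟪K (e - w), z⟫ = 0 := by
      simp only [map_sub, inner_sub_left, hKez, hKwz, sub_self]
    have hez : e - w = z := by rw [← hwz]; abel
    rwa [hez] at this
  have hz0 : z = 0 := by
    by_contra hzne
    exact absurd hKzz (ne_of_gt (hKpos z hzne))
  have heW : e ∈ W := by
    have : e = w := by rw [← hwz, hz0, add_zero]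
    rwa [this]
  -- energy identity : ⟪K e, e⟫ = ⟪f, e⟫
  have hKuHe : ⟪K uH, e⟫ = 0 := by
    rw [hKsymm, real_inner_comm]; exact hgal uH huH_orth
  have hKee : ⟪K e, e⟫ = ⟪f, e⟫ := by
    rw [he]
    simp only [map_sub, inner_sub_left]
    rw [hu (u - uH)]
    have : ⟪K uH, u - uH⟫ = 0 := by rw [← he]; exact hKuHe
    rw [this, sub_zero]
  -- Cauchy-Schwarz for M
  set g := Minv f with hg
  have hMg : M g = f := by
    have := congrArg (fun L => L f) hMinv₁
    simpa using this
  have hfe : ⟪f, e⟫ = ⟪M g, e⟫ := by rw [hMg]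
  have hMinvf : ⟪Minv f, f⟫ = ⟪M g, g⟫ := by
    rw [← hg, ← hMg]
    rw [real_inner_comm]
  -- CS : ⟪M g, e⟫ ≤ sqrt ⟪M g, g⟫ * sqrt ⟪M e, e⟫
  have hCS : ⟪M g, e⟫ ≤ Real.sqrt ⟪M g, g⟫ * Real.sqrt ⟪M e, e⟫ := by
    set a := ⟪M g, g⟫ with ha
    set b := ⟪M g, e⟫ with hb
    set c := ⟪M e, e⟫ with hc
    have hb2 : b ^ 2 ≤ a * c := by
      rcases eq_or_ne g 0 with hg0 | hg0
      · have : b = 0 := by rw [hb, hg0]; simp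
        have : b ^ 2 = 0 := by rw [this]; ring
        rw [this]
        exact mul_nonneg (hMnn g) (hMnn e)
      · have hapos : 0 < a := hMpos g hg0
        have hq : 0 ≤ ⟪M ((-(b/a)) • g + e), (-(b/a)) • g + e⟫ := hMnn _
        have hexp : ⟪M ((-(b/a)) • g + e), (-(b/a)) • g + e⟫
            = (b/a)^2 * a - 2 * (b/a) * b + c := by
          simp only [map_add, map_smul, inner_add_left, inner_add_right,
            real_inner_smul_left, real_inner_smul_right]
          have hMge : ⟪M e, g⟫ = b := by rw [hb, hMsymm, real_inner_comm]
          rw [hMge, ← ha, ← hb, ← hc]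
          ring
        rw [hexp] at hq
        have : (b/a)^2 * a - 2 * (b/a) * b = - b^2 / a := by
          field_simp
          ring
        rw [this] at hq
        have hq' : b ^ 2 / a ≤ c := by rw [neg_div] at hq; linarith
        have hq'' := (div_le_iff₀ hapos).mp hq'
        nlinarith [hq'']
    calc b ≤ |b| := le_abs_self b
    _ = Real.sqrt (b ^ 2) := by rw [Real.sqrt_sq_eq_abs]
    _ ≤ Real.sqrt (a * c) := Real.sqrt_le_sqrt hb2
    _ = Real.sqrt a * Real.sqrt c := Real.sqrt_mul (hMnn g) c
  -- combine
  have hWe : Real.sqrt ⟪M e, e⟫ ≤ Λ * Real.sqrt ⟪K e, e⟫ := hW e heW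
  set s := Real.sqrt ⟪K e, e⟫ with hs
  set R := Real.sqrt ⟪Minv f, f⟫ with hR
  have hsnn : 0 ≤ s := Real.sqrt_nonneg _
  have hRnn : 0 ≤ R := Real.sqrt_nonneg _
  have hs2 : s ^ 2 = ⟪K e, e⟫ := Real.sq_sqrt (hKnn e)
  have hRa : R = Real.sqrt ⟪M g, g⟫ := by rw [hR, hMinvf]
  have hkey : s ^ 2 ≤ Λ * R * s := by
    rw [hs2, hKee, hfe]
    calc ⟪M g, e⟫ ≤ Real.sqrt ⟪M g, g⟫ * Real.sqrt ⟪M e, e⟫ := hCS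
    _ ≤ Real.sqrt ⟪M g, g⟫ * (Λ * s) := by
        apply mul_le_mul_of_nonneg_left hWe (Real.sqrt_nonneg _)
    _ = Λ * R * s := by rw [hRa]; ring
  rcases eq_or_lt_of_le hsnn with hs0 | hs0
  · rw [← hs0]
    exact mul_nonneg hΛ.le hRnn
  · nlinarith [hkey, hs0]
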